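/- Let A be a Hausdorff topological space and let ℋ be the set of all pairs (C,𝒰) where C ⊆ A is compact and 𝒰 is a finite cover of C by open sets. Define (C,𝒰) ≤ (C',𝒰') iff C ⊇ C' and for every U ∈ 𝒰 with U ∩ C' ≠ ∅ there exists V ∈ 𝒰' with U ⊆ V. Then ℋ is downward directed under ≤: for any (C₁,𝒰₁), (C₂,𝒰₂) ∈ ℋ there exists (C,𝒰) ∈ ℋ with (C,𝒰) ≤ (C₁,𝒰₁) and (C,𝒰) ≤ (C₂,𝒰₂); indeed one may take C = C₁ ∪ C₂ and 𝒰 = {U∖C₁ : U ∈ 𝒰₂} ∪ {U∖C₂ : U ∈ 𝒰₁} ∪ {U ∩ V : U ∈ 𝒰₁, V ∈ 𝒰₂, U ∩ V ≠ ∅}. -/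
import Mathlib


/-- The set of pairs `(C, 𝒰)` (compact set, finite open cover of it) is
downward directed under the preorder `(C,𝒰) ≤ (C',𝒰') ↔ C ⊇ C' ∧
∀ U ∈ 𝒰, U ∩ C' ≠ ∅ → ∃ V ∈ 𝒰', U ⊆ V`; indeed an explicit lower bound of
`(C₁,𝒰₁)` and `(C₂,𝒰₂)` is given by `C = C₁ ∪ C₂` and
`𝒰 = {U \ C₁ : U ∈ 𝒰₂} ∪ {U \ C₂ : U ∈ 𝒰₁} ∪
{U ∩ V : U ∈ 𝒰₁, V ∈ 𝒰₂, U ∩ V ≠ ∅}`. -/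
theorem stmt_16 {A : Type*} [TopologicalSpace A] [T2Space A]
    (C₁ C₂ : Set A) (𝒰₁ 𝒰₂ : Set (Set A))
    (hC₁ : IsCompact C₁) (hC₂ : IsCompact C₂)
    (h𝒰₁fin : 𝒰₁.Finite) (h𝒰₂fin : 𝒰₂.Finite)
    (h𝒰₁open : ∀ U ∈ 𝒰₁, IsOpen U) (h𝒰₂open : ∀ U ∈ 𝒰₂, IsOpen U)
    (h𝒰₁cov : C₁ ⊆ ⋃₀ 𝒰₁) (h𝒰₂cov : C₂ ⊆ ⋃₀ 𝒰₂) :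
    ∃ (C : Set A) (𝒰 : Set (Set A)),
      C = C₁ ∪ C₂ ∧
      𝒰 = ((fun U => U \ C₁) '' 𝒰₂) ∪ ((fun U => U \ C₂) '' 𝒰₁) ∪
        {W | ∃ U ∈ 𝒰₁, ∃ V ∈ 𝒰₂, (U ∩ V).Nonempty ∧ W = U ∩ V} ∧
      IsCompact C ∧ 𝒰.Finite ∧ (∀ U ∈ 𝒰, IsOpen U) ∧ C ⊆ ⋃₀ 𝒰 ∧
      (C₁ ⊆ C ∧ ∀ U ∈ 𝒰, (U ∩ C₁).Nonempty → ∃ V ∈ 𝒰₁, U ⊆ V) ∧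
      (C₂ ⊆ C ∧ ∀ U ∈ 𝒰, (U ∩ C₂).Nonempty → ∃ V ∈ 𝒰₂, U ⊆ V) := by
  refine ⟨C₁ ∪ C₂,
    ((fun U => U \ C₁) '' 𝒰₂) ∪ ((fun U => U \ C₂) '' 𝒰₁) ∪
      {W | ∃ U ∈ 𝒰₁, ∃ V ∈ 𝒰₂, (U ∩ V).Nonempty ∧ W = U ∩ V},
    rfl, rfl, hC₁.union hC₂, ?_, ?_, ?_, ⟨Set.subset_union_left, ?_⟩,
    ⟨Set.subset_union_right, ?_⟩⟩
  · refine ((h𝒰₂fin.image _).union (h𝒰₁fin.image _)).union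
      ((h𝒰₁fin.image2 (· ∩ ·) h𝒰₂fin).subset ?_)
    rintro W ⟨U, hU, V, hV, -, rfl⟩
    exact Set.mem_image2_of_mem hU hV
  · intro U hU
    simp only [Set.mem_union, Set.mem_image, Set.mem_setOf_eq] at hU
    obtain (⟨W, hW, rfl⟩ | ⟨W, hW, rfl⟩) | ⟨U', hU', V', hV', -, rfl⟩ := hU
    · exact (h𝒰₂open W hW).sdiff hC₁.isClosed
    · exact (h𝒰₁open W hW).sdiff hC₂.isClosed
    · exact (h𝒰₁open U' hU').inter (h𝒰₂open V' hV')
  · rintro x (hx | hx)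
    · obtain ⟨U, hU, hxU⟩ := h𝒰₁cov hx
      by_cases hx2 : x ∈ C₂
      · obtain ⟨V, hV, hxV⟩ := h𝒰₂cov hx2
        exact ⟨U ∩ V, Or.inr ⟨U, hU, V, hV, ⟨x, hxU, hxV⟩, rfl⟩, hxU, hxV⟩
      · exact ⟨U \ C₂, Or.inl (Or.inr ⟨U, hU, rfl⟩), hxU, hx2⟩
    · obtain ⟨V, hV, hxV⟩ := h𝒰₂cov hx
      by_cases hx1 : x ∈ C₁
      · obtain ⟨U, hU, hxU⟩ := h𝒰₁cov hx1
        exact ⟨U ∩ V, Or.inr ⟨U, hU, V, hV, ⟨x, hxU, hxV⟩, rfl⟩, hxU, hxV⟩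
      · exact ⟨V \ C₁, Or.inl (Or.inl ⟨V, hV, rfl⟩), hxV, hx1⟩
  · intro U hU hne
    simp only [Set.mem_union, Set.mem_image, Set.mem_setOf_eq] at hU
    obtain (⟨W, hW, rfl⟩ | ⟨W, hW, rfl⟩) | ⟨U', hU', V', hV', -, rfl⟩ := hU
    · obtain ⟨x, hx, hx1⟩ := hne
      exact absurd hx1 hx.2
    · exact ⟨W, hW, Set.diff_subset⟩
    · exact ⟨U', hU', Set.inter_subset_left⟩
  · intro U hU hne
    simp only [Set.mem_union, Set.mem_image, Set.mem_setOf_eq] at hU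
    obtain (⟨W, hW, rfl⟩ | ⟨W, hW, rfl⟩) | ⟨U', hU', V', hV', -, rfl⟩ := hU
    · exact ⟨W, hW, Set.diff_subset⟩
    · obtain ⟨x, hx, hx2⟩ := hne
      exact absurd hx2 hx.2
    · exact ⟨V', hV', Set.inter_subset_right⟩
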